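/- Let (ρ, p, v) be a primitive state with conservative state U = (D, m, E), and let α ≥ ϱ₁ where ϱ₁ is the spectral radius in the x₁-direction. Define D^± = D(1 ± v₁/α) and E^± = E ± m₁/α. Then D^± > 0 and E^± > 0 (for both choices of sign); in fact E^± > p·(1 − √(Γ−1))/(Γ − 1 + √(Γ−1)) ≥ 0. -/

import Mathlib

set_option maxHeartbeats 1000000

lemma rhd_aux (a b c s u r p T α : ℝ)
    (ha : 0 ≤ a) (hab : a ≤ b) (hb : b < 1)
    (hc : 0 < c) (hcs : c < s) (hs1 : s ≤ 1)
    (hu : 0 < u) (hu2 : u ^ 2 = 1 - b ^ 2)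
    (hr : u ≤ r) (hr2 : r ^ 2 = 1 - a ^ 2 - (b ^ 2 - a ^ 2) * c ^ 2)
    (hp : 0 < p) (hT : 0 < T) (hTc : T * c ^ 2 = (1 + s ^ 2) * p)
    (hα : (a * (1 - c ^ 2) + c * u * r) / (1 - b ^ 2 * c ^ 2) ≤ α) :
    a < α ∧ p * (1 - s) / (s ^ 2 + s) < T / (1 - b ^ 2) * (1 - a / α) - p := by
  have hb0 : 0 ≤ b := le_trans ha hab
  have hc1 : c < 1 := lt_of_lt_of_le hcs hs1
  have hs0 : 0 < s := lt_trans hc hcs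
  have hd2 : 0 < 1 - b ^ 2 * c ^ 2 := by nlinarith
  have hob : 0 < 1 - b ^ 2 := by nlinarith
  have hac : a * c < 1 := by nlinarith
  have hbc : b * c < 1 := by nlinarith
  set sr : ℝ := (a * (1 - c ^ 2) + c * u * r) / (1 - b ^ 2 * c ^ 2) with hsr
  have hrpos : 0 < r := lt_of_lt_of_le hu hr
  have hcur : c * u * u ≤ c * u * r := mul_le_mul_of_nonneg_left hr (le_of_lt (mul_pos hc hu))
  have hsra : a < sr := by
    rw [hsr, lt_div_iff₀ hd2]
    nlinarith [mul_pos (mul_pos hc hu) hu, hcur, hu2,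
      mul_pos (mul_pos hc (mul_pos hu hu)) (sub_pos.2 hac)]
  have hsrpos : 0 < sr := lt_of_le_of_lt ha hsra
  have hαa : a < α := lt_of_lt_of_le hsra hα
  have hαpos : 0 < α := lt_of_le_of_lt ha hαa
  have hc2 : c ^ 2 < 1 := by nlinarith
  have hb2 : b ^ 2 < 1 := by nlinarith
  have hX : 0 < 1 - b ^ 2 * c ^ 2 - a * (1 - c ^ 2) := by
    rcases le_or_gt (b ^ 2) a with hba | hba
    · have t : 0 ≤ c ^ 2 * (a - b ^ 2) := mul_nonneg (sq_nonneg c) (by linarith)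
      nlinarith [t]
    · have t : c ^ 2 * (b ^ 2 - a) < 1 * (b ^ 2 - a) :=
        mul_lt_mul_of_pos_right hc2 (by linarith)
      nlinarith [t]
  have hcur2 : (c * u * r) ^ 2 = c ^ 2 * (1 - b ^ 2) * (1 - a ^ 2 - (b ^ 2 - a ^ 2) * c ^ 2) := by
    rw [mul_pow, mul_pow, hu2, hr2]
  have key : (1 - b ^ 2 * c ^ 2 - a * (1 - c ^ 2)) ^ 2 - (c * u * r) ^ 2
      = (1 - a) ^ 2 * (1 - c ^ 2) * (1 - b ^ 2 * c ^ 2) := by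
    rw [hcur2]; ring
  have hsr1 : sr ≤ 1 := by
    rw [hsr, div_le_one hd2]
    nlinarith [key, hX, mul_pos (mul_pos hc hu) hrpos,
      mul_nonneg (mul_nonneg (sq_nonneg (1 - a)) (show (0:ℝ) ≤ 1 - c ^ 2 by nlinarith)) hd2.le]
  -- key inequality
  have h1 : u * (1 - b * c) ≤ r - a * c * u := by
    nlinarith [mul_nonneg (mul_nonneg hu.le hc.le) (sub_nonneg.2 hab)]
  have h3 : c * (1 + b * c) < s * (1 + s) := by
    nlinarith [mul_le_mul_of_nonneg_right hb.le (sq_nonneg c)]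
  have h4 : 0 < u * (1 - b * c) := mul_pos hu (by linarith)
  have h5 : s * (1 + s) * (u * (1 - b * c)) ≤ s * (1 + s) * (r - a * c * u) :=
    mul_le_mul_of_nonneg_left h1 (by positivity)
  have h6 : c * (1 + b * c) * (u * (1 - b * c)) < s * (1 + s) * (u * (1 - b * c)) :=
    mul_lt_mul_of_pos_right h3 h4
  have h7 : c * (1 + b * c) * (u * (1 - b * c)) = c * u * (1 - b ^ 2 * c ^ 2) := by ring
  have K : c * u * (1 - b ^ 2 * c ^ 2) < s * (1 + s) * (r - a * c * u) := by linarith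
  -- sr - a as a fraction
  have hsra_eq : sr - a = c * u * (r - a * c * u) / (1 - b ^ 2 * c ^ 2) := by
    rw [hsr, eq_div_iff hd2.ne', sub_mul, div_mul_cancel₀ _ hd2.ne']
    linear_combination a * c ^ 2 * hu2
  -- 1 - a/α ≥ sr - a
  have step1 : sr - a ≤ 1 - a / α := by
    have e1 : a / α ≤ a / sr := div_le_div_of_nonneg_left ha hsrpos hα
    have e2 : a / sr * (1 - sr) ≤ 1 * (1 - sr) :=
      mul_le_mul_of_nonneg_right ((div_le_one hsrpos).2 hsra.le) (by linarith)
    have e3 : a / sr * (1 - sr) = a / sr - a := by field_simp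
    linarith
  have hQ : 0 < T / (1 - b ^ 2) := div_pos hT hob
  have step2 : T / (1 - b ^ 2) * (sr - a) ≤ T / (1 - b ^ 2) * (1 - a / α) :=
    mul_le_mul_of_nonneg_left step1 hQ.le
  have hss : 0 < s ^ 2 + s := by positivity
  have hTcu : 0 < T * (c * u) := mul_pos hT (mul_pos hc hu)
  have target : p * (1 - s) / (s ^ 2 + s) + p
      < T * (c * u * (r - a * c * u)) / ((1 - b ^ 2) * (1 - b ^ 2 * c ^ 2)) := by
    have e : p * (1 - s) / (s ^ 2 + s) + p = (p * (1 - s) + p * (s ^ 2 + s)) / (s ^ 2 + s) := by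
      field_simp
    rw [e, div_lt_div_iff₀ hss (mul_pos hob hd2)]
    calc (p * (1 - s) + p * (s ^ 2 + s)) * ((1 - b ^ 2) * (1 - b ^ 2 * c ^ 2))
        = T * (c * u) * (c * u * (1 - b ^ 2 * c ^ 2)) := by
          linear_combination (-((1 - b ^ 2) * (1 - b ^ 2 * c ^ 2))) * hTc
            + (-(T * c ^ 2 * (1 - b ^ 2 * c ^ 2))) * hu2
      _ < T * (c * u) * (s * (1 + s) * (r - a * c * u)) := mul_lt_mul_of_pos_left K hTcu
      _ = T * (c * u * (r - a * c * u)) * (s ^ 2 + s) := by ring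
  have main : p * (1 - s) / (s ^ 2 + s) < T / (1 - b ^ 2) * (sr - a) - p := by
    rw [hsra_eq, div_mul_div_comm]
    linarith [target]
  exact ⟨hαa, by linarith [step2, main]⟩

theorem positivity_of_shifted_density_and_energy
    (d : ℕ) (hd : 0 < d) (Γ ρ p : ℝ)
    (hΓ1 : 1 < Γ) (hΓ2 : Γ ≤ 2) (hρ : 0 < ρ) (hp : 0 < p)
    (v : EuclideanSpace ℝ (Fin d)) (hv : ‖v‖ < 1)
    (e h W D E cs sr : ℝ) (m : EuclideanSpace ℝ (Fin d))
    (he : e = p / ((Γ - 1) * ρ))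
    (hh : h = 1 + e + p / ρ)
    (hW : W = 1 / Real.sqrt (1 - ‖v‖ ^ 2))
    (hD : D = ρ * W)
    (hm : m = (ρ * h * W ^ 2) • v)
    (hE : E = ρ * h * W ^ 2 - p)
    (hcs : cs = Real.sqrt (Γ * p / (ρ * h)))
    (hsr : sr = (|v ⟨0, hd⟩| * (1 - cs ^ 2)
        + cs * W⁻¹ * Real.sqrt (1 - (v ⟨0, hd⟩) ^ 2 - (‖v‖ ^ 2 - (v ⟨0, hd⟩) ^ 2) * cs ^ 2))
        / (1 - ‖v‖ ^ 2 * cs ^ 2))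
    (α : ℝ) (hα : sr ≤ α) :
    0 < D * (1 + v ⟨0, hd⟩ / α) ∧
    0 < D * (1 - v ⟨0, hd⟩ / α) ∧
    E + m ⟨0, hd⟩ / α > p * (1 - Real.sqrt (Γ - 1)) / (Γ - 1 + Real.sqrt (Γ - 1)) ∧
    E - m ⟨0, hd⟩ / α > p * (1 - Real.sqrt (Γ - 1)) / (Γ - 1 + Real.sqrt (Γ - 1)) ∧
    0 ≤ p * (1 - Real.sqrt (Γ - 1)) / (Γ - 1 + Real.sqrt (Γ - 1)) ∧
    0 < E + m ⟨0, hd⟩ / α ∧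
    0 < E - m ⟨0, hd⟩ / α := by
  set A : ℝ := v ⟨0, hd⟩ with hA
  have hb0 : (0:ℝ) ≤ ‖v‖ := norm_nonneg v
  have hob : 0 < 1 - ‖v‖ ^ 2 := by nlinarith
  set u : ℝ := Real.sqrt (1 - ‖v‖ ^ 2) with hu_def
  have hu : 0 < u := Real.sqrt_pos.2 hob
  have hu2 : u ^ 2 = 1 - ‖v‖ ^ 2 := Real.sq_sqrt hob.le
  have hWu : W = 1 / u := hW
  have hWpos : 0 < W := by rw [hWu]; positivity
  have hWinv : W⁻¹ = u := by rw [hWu, one_div, inv_inv]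
  have hW2 : W ^ 2 = 1 / (1 - ‖v‖ ^ 2) := by
    rw [hWu, div_pow, one_pow, hu2]
  -- e, h positivity
  have hΓ1' : (0:ℝ) < Γ - 1 := by linarith
  have hepos : 0 < e := by rw [he]; exact div_pos hp (mul_pos hΓ1' hρ)
  have hhpos : 0 < h := by
    rw [hh]
    have : 0 < p / ρ := div_pos hp hρ
    linarith
  have hT : 0 < ρ * h := mul_pos hρ hhpos
  -- coordinate bound
  have hcoord : |A| ≤ ‖v‖ := by
    have h2 : A ^ 2 ≤ ‖v‖ ^ 2 := by
      rw [EuclideanSpace.norm_eq, Real.sq_sqrt (by positivity)]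
      have := Finset.single_le_sum (f := fun i => ‖v i‖ ^ 2)
        (fun i _ => by positivity) (Finset.mem_univ (⟨0, hd⟩ : Fin d))
      simpa [Real.norm_eq_abs, sq_abs] using this
    calc |A| = Real.sqrt (A ^ 2) := (Real.sqrt_sq_eq_abs A).symm
    _ ≤ Real.sqrt (‖v‖ ^ 2) := Real.sqrt_le_sqrt h2
    _ = ‖v‖ := Real.sqrt_sq hb0
  -- sound speed
  have hcsarg : 0 < Γ * p / (ρ * h) := div_pos (mul_pos (by linarith) hp) hT
  have hcspos : 0 < cs := by rw [hcs]; exact Real.sqrt_pos.2 hcsarg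
  have hcs2 : cs ^ 2 = Γ * p / (ρ * h) := by rw [hcs]; exact Real.sq_sqrt hcsarg.le
  set s : ℝ := Real.sqrt (Γ - 1) with hs_def
  have hs2 : s ^ 2 = Γ - 1 := Real.sq_sqrt (by linarith)
  have hs1 : s ≤ 1 := by
    rw [hs_def]
    calc Real.sqrt (Γ - 1) ≤ Real.sqrt 1 := Real.sqrt_le_sqrt (by linarith)
    _ = 1 := Real.sqrt_one
  have hcs_lt : cs < s := by
    rw [hcs, hs_def]
    apply Real.sqrt_lt_sqrt hcsarg.le
    rw [div_lt_iff₀ hT, hh, he]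
    have expand : (Γ - 1) * (ρ * (1 + p / ((Γ - 1) * ρ) + p / ρ))
        = (Γ - 1) * ρ + p + (Γ - 1) * p := by
      field_simp
    rw [expand]
    nlinarith
  have hTc : ρ * h * cs ^ 2 = (1 + s ^ 2) * p := by
    rw [hcs2, hs2]
    field_simp
    ring
  -- the sqrt in sr
  set r : ℝ := Real.sqrt (1 - A ^ 2 - (‖v‖ ^ 2 - A ^ 2) * cs ^ 2) with hr_def
  have hcs1 : cs < 1 := lt_of_lt_of_le hcs_lt hs1
  have hA2b : A ^ 2 ≤ ‖v‖ ^ 2 := by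
    rw [← sq_abs A]
    exact pow_le_pow_left₀ (abs_nonneg A) hcoord 2
  have hcs2le : cs ^ 2 ≤ 1 := pow_le_one₀ hcspos.le hcs1.le
  have hRge : 1 - ‖v‖ ^ 2 ≤ 1 - A ^ 2 - (‖v‖ ^ 2 - A ^ 2) * cs ^ 2 := by
    have t : (‖v‖ ^ 2 - A ^ 2) * cs ^ 2 ≤ (‖v‖ ^ 2 - A ^ 2) * 1 :=
      mul_le_mul_of_nonneg_left hcs2le (sub_nonneg.2 hA2b)
    linarith
  have hR0 : 0 ≤ 1 - A ^ 2 - (‖v‖ ^ 2 - A ^ 2) * cs ^ 2 := by linarith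
  have hr2 : r ^ 2 = 1 - |A| ^ 2 - (‖v‖ ^ 2 - |A| ^ 2) * cs ^ 2 := by
    rw [hr_def, Real.sq_sqrt hR0, sq_abs]
  have hru : u ≤ r := by
    rw [hu_def, hr_def]
    exact Real.sqrt_le_sqrt hRge
  -- apply the auxiliary lemma
  have hα' : (|A| * (1 - cs ^ 2) + cs * u * r) / (1 - ‖v‖ ^ 2 * cs ^ 2) ≤ α := by
    rw [hsr, hWinv] at hα
    exact hα
  obtain ⟨haα, hE'⟩ := rhd_aux |A| ‖v‖ cs s u r p (ρ * h) α
    (abs_nonneg A) hcoord hv hcspos hcs_lt hs1 hu hu2 hru hr2 hp hT hTc hα'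
  have hαpos : 0 < α := lt_of_le_of_lt (abs_nonneg A) haα
  have haα1 : |A| / α < 1 := (div_lt_one hαpos).2 haα
  have hdle : A / α ≤ |A| / α := (div_le_div_iff_of_pos_right hαpos).2 (le_abs_self A)
  have hdge : -(|A| / α) ≤ A / α := by
    have := (div_le_div_iff_of_pos_right hαpos).2 (neg_abs_le A)
    rwa [neg_div] at this
  -- conservative quantities
  have hmul : ρ * h * W ^ 2 = ρ * h / (1 - ‖v‖ ^ 2) := by rw [hW2]; ring
  have hQpos : 0 < ρ * h * W ^ 2 := mul_pos hT (pow_pos hWpos 2)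
  have hm1 : m ⟨0, hd⟩ = ρ * h * W ^ 2 * A := by
    rw [hm]
    simp [hA, PiLp.smul_apply, smul_eq_mul]
  have hcore : p * (1 - s) / (s ^ 2 + s) < ρ * h * W ^ 2 * (1 - |A| / α) - p := by
    rw [hmul]; exact hE'
  have hEplus : p * (1 - s) / (s ^ 2 + s) < E + m ⟨0, hd⟩ / α := by
    have hle : ρ * h * W ^ 2 * (1 - |A| / α) ≤ ρ * h * W ^ 2 * (1 + A / α) :=
      mul_le_mul_of_nonneg_left (by linarith) hQpos.le
    have heq : E + m ⟨0, hd⟩ / α = ρ * h * W ^ 2 * (1 + A / α) - p := by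
      rw [hE, hm1]; ring
    linarith
  have hEminus : p * (1 - s) / (s ^ 2 + s) < E - m ⟨0, hd⟩ / α := by
    have hle : ρ * h * W ^ 2 * (1 - |A| / α) ≤ ρ * h * W ^ 2 * (1 - A / α) :=
      mul_le_mul_of_nonneg_left (by linarith) hQpos.le
    have heq : E - m ⟨0, hd⟩ / α = ρ * h * W ^ 2 * (1 - A / α) - p := by
      rw [hE, hm1]; ring
    linarith
  have hs0 : 0 ≤ s := Real.sqrt_nonneg _
  have hbound0 : 0 ≤ p * (1 - s) / (s ^ 2 + s) :=
    div_nonneg (mul_nonneg hp.le (by linarith)) (by positivity)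
  have hGs : Γ - 1 + s = s ^ 2 + s := by rw [hs2]
  have hDpos : 0 < D := by rw [hD]; exact mul_pos hρ hWpos
  have h1p : 0 < 1 + A / α := by linarith
  have h1m : 0 < 1 - A / α := by linarith
  rw [hGs]
  exact ⟨mul_pos hDpos h1p, mul_pos hDpos h1m, hEplus, hEminus, hbound0,
    by linarith, by linarith⟩
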